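/- Let R be a finite direct product of integral domains and H a Hopf algebra over R that is projective as an R-module. If H contains a non-zero left or right integral t with Ann_R(t) = 0, then H is finitely generated as an R-module. -/

import Mathlib

set_option synthInstance.maxHeartbeats 1000000
set_option maxHeartbeats 1600000


universe u v

/-- A left integral: `h * t = ε(h) • t` for all `h`. -/
def IsLeftIntegral (R : Type u) {H : Type v} [CommRing R] [Ring H] [HopfAlgebra R H]
    (t : H) : Prop :=
  ∀ h : H, h * t = Coalgebra.counit (R := R) h • t

/-- A right integral: `t * h = ε(h) • t` for all `h`. -/
def IsRightIntegral (R : Type u) {H : Type v} [CommRing R] [Ring H] [HopfAlgebra R H]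
    (t : H) : Prop :=
  ∀ h : H, t * h = Coalgebra.counit (R := R) h • t

namespace HopfFiniteAux

open TensorProduct LinearMap Coalgebra HopfAlgebra

variable {R : Type u} {H : Type v} [CommRing R] [Ring H] [HopfAlgebra R H]

/-! ### Multiplication by simple tensors as `lTensor`/`rTensor` -/

lemma one_tmul_mul_eq (a : H) (z : H ⊗[R] H) :
    ((1 : H) ⊗ₜ[R] a) * z = lTensor H (mulLeft R a) z := by
  induction z using TensorProduct.induction_on with
  | zero => simp
  | tmul x y => simp [Algebra.TensorProduct.tmul_mul_tmul]
  | add x y hx hy => rw [mul_add, map_add, hx, hy]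

lemma tmul_one_mul_eq (a : H) (z : H ⊗[R] H) :
    (a ⊗ₜ[R] (1 : H)) * z = rTensor H (mulLeft R a) z := by
  induction z using TensorProduct.induction_on with
  | zero => simp
  | tmul x y => simp [Algebra.TensorProduct.tmul_mul_tmul]
  | add x y hx hy => rw [mul_add, map_add, hx, hy]

lemma mul_one_tmul_eq (a : H) (z : H ⊗[R] H) :
    z * ((1 : H) ⊗ₜ[R] a) = lTensor H (mulRight R a) z := by
  induction z using TensorProduct.induction_on with
  | zero => simp
  | tmul x y => simp [Algebra.TensorProduct.tmul_mul_tmul]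
  | add x y hx hy => rw [add_mul, map_add, hx, hy]

lemma mul_tmul_one_eq (a : H) (z : H ⊗[R] H) :
    z * (a ⊗ₜ[R] (1 : H)) = rTensor H (mulRight R a) z := by
  induction z using TensorProduct.induction_on with
  | zero => simp
  | tmul x y => simp [Algebra.TensorProduct.tmul_mul_tmul]
  | add x y hx hy => rw [add_mul, map_add, hx, hy]

/-! ### The maps `mS (x ⊗ y) = S x * y` and `mS' (x ⊗ y) = x * S y` -/

/-- `x ⊗ y ↦ S x * y`. -/
noncomputable def mS : H ⊗[R] H →ₗ[R] H :=
  LinearMap.mul' R H ∘ₗ rTensor H (antipode (R := R))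

/-- `x ⊗ y ↦ x * S y`. -/
noncomputable def mS' : H ⊗[R] H →ₗ[R] H :=
  LinearMap.mul' R H ∘ₗ lTensor H (antipode (R := R))

@[simp] lemma mS_tmul (x y : H) : (mS (R := R)) (x ⊗ₜ[R] y) = antipode (R := R) x * y := by
  simp [mS]

@[simp] lemma mS'_tmul (x y : H) : (mS' (R := R)) (x ⊗ₜ[R] y) = x * antipode (R := R) y := by
  simp [mS']

lemma mS_comp_comul :
    (mS (R := R) (H := H)) ∘ₗ comul = Algebra.linearMap R H ∘ₗ counit := by
  rw [mS, LinearMap.comp_assoc]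
  exact mul_antipode_rTensor_comul

lemma mS'_comp_comul :
    (mS' (R := R) (H := H)) ∘ₗ comul = Algebra.linearMap R H ∘ₗ counit := by
  rw [mS', LinearMap.comp_assoc]
  exact mul_antipode_lTensor_comul

/-! ### The Galois-type maps `G, G'` -/

/-- `G (u ⊗ v) = (S u ⊗ 1) * Δ v`. -/
noncomputable def G : H ⊗[R] H →ₗ[R] H ⊗[R] H :=
  rTensor H (mS (R := R)) ∘ₗ (TensorProduct.assoc R H H H).symm.toLinearMap ∘ₗ
    lTensor H (comul (R := R))

/-- `G' (u ⊗ v) = Δ u * (1 ⊗ S v)`. -/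
noncomputable def G' : H ⊗[R] H →ₗ[R] H ⊗[R] H :=
  lTensor H (mS' (R := R)) ∘ₗ (TensorProduct.assoc R H H H).toLinearMap ∘ₗ
    rTensor H (comul (R := R))

lemma rTensor_mS_assoc_symm (u : H) (w : H ⊗[R] H) :
    rTensor H (mS (R := R)) ((TensorProduct.assoc R H H H).symm (u ⊗ₜ[R] w)) =
      ((antipode (R := R) u) ⊗ₜ[R] (1 : H)) * w := by
  induction w using TensorProduct.induction_on with
  | zero => rw [tmul_zero, map_zero, map_zero, mul_zero]
  | tmul x y =>
    rw [assoc_symm_tmul, rTensor_tmul, mS_tmul, Algebra.TensorProduct.tmul_mul_tmul, one_mul]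
  | add x y hx hy => rw [tmul_add, map_add, map_add, mul_add, hx, hy]

lemma lTensor_mS'_assoc (w : H ⊗[R] H) (v : H) :
    lTensor H (mS' (R := R)) ((TensorProduct.assoc R H H H) (w ⊗ₜ[R] v)) =
      w * ((1 : H) ⊗ₜ[R] (antipode (R := R) v)) := by
  induction w using TensorProduct.induction_on with
  | zero => rw [zero_tmul, map_zero, map_zero, zero_mul]
  | tmul x y =>
    rw [assoc_tmul, lTensor_tmul, mS'_tmul, Algebra.TensorProduct.tmul_mul_tmul, mul_one]
  | add x y hx hy => rw [add_tmul, map_add, map_add, add_mul, hx, hy]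

lemma G_tmul (u v : H) :
    (G (R := R)) (u ⊗ₜ[R] v) = ((antipode (R := R) u) ⊗ₜ[R] (1 : H)) * comul v := by
  rw [G]
  simp only [LinearMap.comp_apply, LinearEquiv.coe_coe, lTensor_tmul]
  exact rTensor_mS_assoc_symm u (comul v)

lemma G'_tmul (u v : H) :
    (G' (R := R)) (u ⊗ₜ[R] v) = comul u * ((1 : H) ⊗ₜ[R] (antipode (R := R) v)) := by
  rw [G']
  simp only [LinearMap.comp_apply, LinearEquiv.coe_coe, rTensor_tmul]
  exact lTensor_mS'_assoc (comul u) v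

lemma G_comul (h : H) : (G (R := R)) (comul h) = (1 : H) ⊗ₜ[R] h := by
  rw [G]
  simp only [LinearMap.comp_apply, LinearEquiv.coe_coe]
  rw [show ((TensorProduct.assoc R H H H).symm (lTensor H comul (comul h)))
        = rTensor H comul (comul h) from coassoc_symm_apply h,
    ← LinearMap.comp_apply, ← rTensor_comp, mS_comp_comul, rTensor_comp,
    LinearMap.comp_apply, rTensor_counit_comul, rTensor_tmul]
  simp

lemma G'_comul (h : H) : (G' (R := R)) (comul h) = h ⊗ₜ[R] (1 : H) := by
  rw [G']
  simp only [LinearMap.comp_apply, LinearEquiv.coe_coe]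
  rw [show ((TensorProduct.assoc R H H H) (rTensor H comul (comul h)))
        = lTensor H comul (comul h) from coassoc_apply h,
    ← LinearMap.comp_apply, ← lTensor_comp, mS'_comp_comul, lTensor_comp,
    LinearMap.comp_apply, lTensor_counit_comul, lTensor_tmul]
  simp

/-! ### The key identities for integrals -/

/-- For a left integral `t`, `(1 ⊗ h) * Δ t = (S h ⊗ 1) * Δ t`. -/
lemma left_star {t : H} (hL : IsLeftIntegral R t) (h : H) :
    ((1 : H) ⊗ₜ[R] h) * comul (R := R) t = ((antipode (R := R) h) ⊗ₜ[R] (1 : H)) * comul t := by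
  -- the map `V u⊗v = (S u ⊗ 1) * Δ(v * t)`
  set V : H ⊗[R] H →ₗ[R] H ⊗[R] H := (G (R := R)) ∘ₗ lTensor H (mulRight R t) with hV
  have hVt : ∀ u v : H, V (u ⊗ₜ[R] v)
      = ((antipode (R := R) u) ⊗ₜ[R] (1 : H)) * comul (v * t) := by
    intro u v
    simp only [hV, LinearMap.comp_apply, lTensor_tmul, mulRight_apply, G_tmul]
  -- Way 1 : V = (· * Δ t) ∘ G
  have way1 : V (comul h) = ((1 : H) ⊗ₜ[R] h) * comul t := by
    have : V = (LinearMap.mulRight R (comul (R := R) t)) ∘ₗ (G (R := R)) := by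
      apply TensorProduct.ext'
      intro u v
      rw [hVt u v, LinearMap.comp_apply, mulRight_apply, G_tmul,
        Bialgebra.comul_mul, ← mul_assoc]
    rw [this, LinearMap.comp_apply, G_comul, mulRight_apply]
  -- Way 2 : V = W ∘ rid ∘ (1 ⊗ ε)
  have way2 : V (comul h) = ((antipode (R := R) h) ⊗ₜ[R] (1 : H)) * comul t := by
    set W : H →ₗ[R] H ⊗[R] H :=
      (LinearMap.mulRight R (comul (R := R) t)) ∘ₗ
        ((TensorProduct.mk R H H).flip (1 : H)) ∘ₗ (antipode (R := R)) with hW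
    have hWa : ∀ u : H, W u = ((antipode (R := R) u) ⊗ₜ[R] (1 : H)) * comul t := by
      intro u; simp [hW]
    have : V = W ∘ₗ (TensorProduct.rid R H).toLinearMap ∘ₗ lTensor H (counit (R := R)) := by
      apply TensorProduct.ext'
      intro u v
      rw [hVt u v, hL v, map_smul, mul_smul_comm]
      simp only [LinearMap.comp_apply, lTensor_tmul, LinearEquiv.coe_coe, rid_tmul, map_smul]
      rw [hWa u]
    rw [this]
    simp only [LinearMap.comp_apply, LinearEquiv.coe_coe, lTensor_counit_comul, rid_tmul,
      one_smul]
    exact hWa h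
  rw [← way1, way2]

/-- For a right integral `t`, `Δ t * (h ⊗ 1) = Δ t * (1 ⊗ S h)`. -/
lemma right_star {t : H} (hR : IsRightIntegral R t) (h : H) :
    comul (R := R) t * (h ⊗ₜ[R] (1 : H)) = comul t * ((1 : H) ⊗ₜ[R] (antipode (R := R) h)) := by
  set V : H ⊗[R] H →ₗ[R] H ⊗[R] H := (G' (R := R)) ∘ₗ rTensor H (mulLeft R t) with hV
  have hVt : ∀ u v : H, V (u ⊗ₜ[R] v)
      = comul (t * u) * ((1 : H) ⊗ₜ[R] (antipode (R := R) v)) := by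
    intro u v
    simp only [hV, LinearMap.comp_apply, rTensor_tmul, mulLeft_apply, G'_tmul]
  have way1 : V (comul h) = comul t * (h ⊗ₜ[R] (1 : H)) := by
    have : V = (LinearMap.mulLeft R (comul (R := R) t)) ∘ₗ (G' (R := R)) := by
      apply TensorProduct.ext'
      intro u v
      rw [hVt u v, LinearMap.comp_apply, mulLeft_apply, G'_tmul,
        Bialgebra.comul_mul, mul_assoc]
    rw [this, LinearMap.comp_apply, G'_comul, mulLeft_apply]
  have way2 : V (comul h) = comul t * ((1 : H) ⊗ₜ[R] (antipode (R := R) h)) := by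
    set W : H →ₗ[R] H ⊗[R] H :=
      (LinearMap.mulLeft R (comul (R := R) t)) ∘ₗ
        ((TensorProduct.mk R H H) (1 : H)) ∘ₗ (antipode (R := R)) with hW
    have hWa : ∀ v : H, W v = comul t * ((1 : H) ⊗ₜ[R] (antipode (R := R) v)) := by
      intro v; simp [hW]
    have : V = W ∘ₗ (TensorProduct.lid R H).toLinearMap ∘ₗ rTensor H (counit (R := R)) := by
      apply TensorProduct.ext'
      intro u v
      rw [hVt u v, hR u, map_smul, smul_mul_assoc]
      simp only [LinearMap.comp_apply, rTensor_tmul, LinearEquiv.coe_coe, lid_tmul, map_smul]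
      rw [hWa v]
    rw [this]
    simp only [LinearMap.comp_apply, LinearEquiv.coe_coe, rTensor_counit_comul, lid_tmul,
      one_smul]
    exact hWa h
  rw [← way1, way2]

/-! ### Extraction of coefficients via a projectivity section -/

lemma finsupp_sum_eq {α M N : Type*} [Zero M] [AddCommMonoid N] (f : α →₀ M) (g : α → M → N) :
    f.sum g = ∑ a ∈ f.support, g a (f a) := rfl

section Gamma

variable [DecidableEq H] (s : H →ₗ[R] (H →₀ R))

variable {M N : Type v}
  [AddCommGroup M] [Module R M] [AddCommGroup N] [Module R N]

/-- `γ (x ⊗ m) j = s x j • m` : extraction of first-leg coefficients. -/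
noncomputable def gam : H ⊗[R] M →ₗ[R] (H →₀ M) :=
  (finsuppScalarLeft R M H).toLinearMap ∘ₗ (rTensor M s)

/-- `γ' (m ⊗ x) j = s x j • m` : extraction of second-leg coefficients. -/
noncomputable def gam' : M ⊗[R] H →ₗ[R] (H →₀ M) :=
  (finsuppScalarRight R R M H).toLinearMap ∘ₗ (lTensor M s)

@[simp] lemma gam_tmul (x : H) (m : M) (j : H) :
    gam s (x ⊗ₜ[R] m) j = s x j • m := by
  simp [gam]

@[simp] lemma gam'_tmul (m : M) (x : H) (j : H) :
    gam' s (m ⊗ₜ[R] x) j = s x j • m := by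
  simp [gam']

lemma gam_nat (φ : M →ₗ[R] N) (z : H ⊗[R] M) (j : H) :
    gam s (lTensor H φ z) j = φ (gam s z j) := by
  induction z using TensorProduct.induction_on with
  | zero => simp
  | tmul x m => simp
  | add z₁ z₂ h₁ h₂ => simp only [map_add, Finsupp.add_apply, h₁, h₂]

lemma gam'_nat (φ : M →ₗ[R] N) (z : M ⊗[R] H) (j : H) :
    gam' s (rTensor H φ z) j = φ (gam' s z j) := by
  induction z using TensorProduct.induction_on with
  | zero => simp
  | tmul m x => simp
  | add z₁ z₂ h₁ h₂ => simp only [map_add, Finsupp.add_apply, h₁, h₂]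

variable (hs : ∀ x : H, Finsupp.linearCombination R (id : H → H) (s x) = x)

include hs in
lemma gam_recon (z : H ⊗[R] M) :
    ((gam s z).sum fun j m => j ⊗ₜ[R] m) = z := by
  induction z using TensorProduct.induction_on with
  | zero => simp
  | tmul x m =>
    have hsupp : (gam s (x ⊗ₜ[R] m)).support ⊆ (s x).support := by
      intro j hj
      rw [Finsupp.mem_support_iff] at hj ⊢
      intro h0
      exact hj (by simp [h0])
    have hvanish : ∀ j ∈ (s x).support, j ∉ (gam s (x ⊗ₜ[R] m)).support →
        j ⊗ₜ[R] (gam s (x ⊗ₜ[R] m) j) = 0 := by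
      intro j _ hj
      rw [Finsupp.notMem_support_iff.mp hj, tmul_zero]
    rw [finsupp_sum_eq, Finset.sum_subset hsupp hvanish]
    have hcong : ∀ j ∈ (s x).support,
        j ⊗ₜ[R] (gam s (x ⊗ₜ[R] m) j) = (s x j • j) ⊗ₜ[R] m := by
      intro j _
      rw [gam_tmul, tmul_smul, smul_tmul']
    rw [Finset.sum_congr rfl hcong, ← TensorProduct.sum_tmul]
    congr 1
    have := hs x
    rwa [Finsupp.linearCombination_apply, finsupp_sum_eq] at this
  | add z₁ z₂ h₁ h₂ =>
    rw [map_add, Finsupp.sum_add_index' (fun j => tmul_zero _ j)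
      (fun j m₁ m₂ => tmul_add j m₁ m₂), h₁, h₂]

include hs in
lemma gam'_recon (z : M ⊗[R] H) :
    ((gam' s z).sum fun j m => m ⊗ₜ[R] j) = z := by
  induction z using TensorProduct.induction_on with
  | zero => simp
  | tmul m x =>
    have hsupp : (gam' s (m ⊗ₜ[R] x)).support ⊆ (s x).support := by
      intro j hj
      rw [Finsupp.mem_support_iff] at hj ⊢
      intro h0
      exact hj (by simp [h0])
    have hvanish : ∀ j ∈ (s x).support, j ∉ (gam' s (m ⊗ₜ[R] x)).support →
        (gam' s (m ⊗ₜ[R] x) j) ⊗ₜ[R] j = 0 := by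
      intro j _ hj
      rw [Finsupp.notMem_support_iff.mp hj, zero_tmul]
    rw [finsupp_sum_eq, Finset.sum_subset hsupp hvanish]
    have hcong : ∀ j ∈ (s x).support,
        (gam' s (m ⊗ₜ[R] x) j) ⊗ₜ[R] j = m ⊗ₜ[R] (s x j • j) := by
      intro j _
      rw [gam'_tmul]
      exact smul_tmul _ _ _
    rw [Finset.sum_congr rfl hcong, ← TensorProduct.tmul_sum]
    congr 1
    have := hs x
    rwa [Finsupp.linearCombination_apply, finsupp_sum_eq] at this
  | add z₁ z₂ h₁ h₂ =>
    rw [map_add, Finsupp.sum_add_index' (fun j => zero_tmul _ j)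
      (fun j m₁ m₂ => add_tmul m₁ m₂ j), h₁, h₂]

end Gamma

/-! ### The decomposition lemmas -/

/-- Data produced from a left integral: a finitely supported family `c` with
`t = ∑ ε (c j) • j` and `ε (c j) • x` always in the span of the values of `c`. -/
lemma decomp_left [DecidableEq H] (s : H →ₗ[R] (H →₀ R))
    (hs : ∀ x : H, Finsupp.linearCombination R (id : H → H) (s x) = x)
    {t : H} (hL : IsLeftIntegral R t) :
    ∃ c : H →₀ H,
      (t = ∑ j ∈ c.support, Coalgebra.counit (R := R) (c j) • j) ∧
      (∀ j x : H, Coalgebra.counit (R := R) (c j) • x ∈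
        Submodule.span R ((c.support.image c : Finset H) : Set H)) := by
  classical
  set c : H →₀ H := gam s (comul (R := R) t) with hc
  set CC : Submodule R H := Submodule.span R ((c.support.image c : Finset H) : Set H) with hCC
  have c_mem : ∀ k, c k ∈ CC := by
    intro k
    by_cases hk : k ∈ c.support
    · exact Submodule.subset_span (by simpa using Finset.mem_image_of_mem c hk)
    · rw [Finsupp.notMem_support_iff] at hk
      rw [hk]; exact zero_mem _
  have hδ : comul (R := R) t = ∑ j ∈ c.support, j ⊗ₜ[R] c j := by
    have := gam_recon s hs (comul (R := R) t)
    rw [finsupp_sum_eq] at this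
    exact this.symm
  -- CC is a left ideal
  have mulC : ∀ (h w : H), w ∈ CC → h * w ∈ CC := by
    have hgen : ∀ (h j : H), h * c j ∈ CC := by
      intro h j
      have e1 : h * c j = gam s (lTensor H (mulLeft R h) (comul (R := R) t)) j :=
        (gam_nat s (mulLeft R h) _ j).symm
      rw [e1, ← one_tmul_mul_eq, left_star hL, tmul_one_mul_eq]
      rw [hδ, map_sum, map_sum, Finsupp.finset_sum_apply]
      refine Submodule.sum_mem _ (fun k _ => ?_)
      rw [rTensor_tmul, gam_tmul, mulLeft_apply]
      exact Submodule.smul_mem _ _ (c_mem k)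
    intro h w hw
    induction hw using Submodule.span_induction with
    | mem y hy =>
      obtain ⟨j, _, rfl⟩ := Finset.mem_image.mp hy
      exact hgen h j
    | zero => rw [mul_zero]; exact zero_mem _
    | add y z _ _ hy hz => rw [mul_add]; exact add_mem hy hz
    | smul a y _ hy => rw [mul_smul_comm]; exact Submodule.smul_mem _ _ hy
  -- ε (c j) • 1 ∈ CC
  have epsOne : ∀ j : H, Coalgebra.counit (R := R) (c j) • (1 : H) ∈ CC := by
    intro j
    have e0 : Coalgebra.counit (R := R) (c j) • (1 : H) = mS (R := R) (comul (c j)) := by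
      rw [← Algebra.algebraMap_eq_smul_one, mS, LinearMap.comp_apply]
      exact (mul_antipode_rTensor_comul_apply (c j)).symm
    have e1 : mS (R := R) (comul (c j)) =
        gam s (lTensor H ((mS (R := R)) ∘ₗ comul) (comul (R := R) t)) j := by
      rw [gam_nat s _ _ j, LinearMap.comp_apply]
    rw [e0, e1, lTensor_comp, LinearMap.comp_apply]
    rw [show lTensor H (comul (R := R)) (comul (R := R) t)
        = TensorProduct.assoc R H H H (rTensor H comul (comul t)) from (coassoc_apply t).symm]
    rw [hδ]
    simp only [map_sum, rTensor_tmul]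
    rw [Finsupp.finset_sum_apply]
    refine Submodule.sum_mem _ (fun k _ => ?_)
    -- term : gam s (lTensor mS (assoc ((comul k) ⊗ₜ c k))) j ∈ CC
    have sub : ∀ (z : H ⊗[R] H) (w : H), w ∈ CC →
        gam s (lTensor H (mS (R := R)) ((TensorProduct.assoc R H H H) (z ⊗ₜ[R] w))) j ∈ CC := by
      intro z w hw
      induction z using TensorProduct.induction_on with
      | zero => rw [zero_tmul, map_zero, map_zero, map_zero]
                simp only [Finsupp.coe_zero, Pi.zero_apply]
                exact zero_mem _
      | tmul x y =>
        rw [assoc_tmul, lTensor_tmul, gam_tmul, mS_tmul]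
        exact Submodule.smul_mem _ _ (mulC _ _ hw)
      | add z₁ z₂ h₁ h₂ =>
        rw [add_tmul, map_add, map_add, map_add]
        simp only [Finsupp.add_apply]
        exact add_mem h₁ h₂
    exact sub (comul k) (c k) (c_mem k)
  refine ⟨c, ?_, ?_⟩
  · -- t = ∑ ε (c j) • j
    have h1 : (TensorProduct.rid R H) (lTensor H (counit (R := R)) (comul (R := R) t)) = t := by
      rw [lTensor_counit_comul, rid_tmul, one_smul]
    rw [← h1, hδ, map_sum, map_sum]
    refine Finset.sum_congr rfl (fun j _ => ?_)
    rw [lTensor_tmul, rid_tmul]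
  · intro j x
    have : Coalgebra.counit (R := R) (c j) • x = x * (Coalgebra.counit (R := R) (c j) • 1) := by
      rw [mul_smul_comm, mul_one]
    rw [this]
    exact mulC x _ (epsOne j)

/-- The mirror of `decomp_left` for right integrals. -/
lemma decomp_right [DecidableEq H] (s : H →ₗ[R] (H →₀ R))
    (hs : ∀ x : H, Finsupp.linearCombination R (id : H → H) (s x) = x)
    {t : H} (hR : IsRightIntegral R t) :
    ∃ c : H →₀ H,
      (t = ∑ j ∈ c.support, Coalgebra.counit (R := R) (c j) • j) ∧
      (∀ j x : H, Coalgebra.counit (R := R) (c j) • x ∈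
        Submodule.span R ((c.support.image c : Finset H) : Set H)) := by
  classical
  set c : H →₀ H := gam' s (comul (R := R) t) with hc
  set CC : Submodule R H := Submodule.span R ((c.support.image c : Finset H) : Set H) with hCC
  have c_mem : ∀ k, c k ∈ CC := by
    intro k
    by_cases hk : k ∈ c.support
    · exact Submodule.subset_span (by simpa using Finset.mem_image_of_mem c hk)
    · rw [Finsupp.notMem_support_iff] at hk
      rw [hk]; exact zero_mem _
  have hδ : comul (R := R) t = ∑ j ∈ c.support, c j ⊗ₜ[R] j := by
    have := gam'_recon s hs (comul (R := R) t)
    rw [finsupp_sum_eq] at this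
    exact this.symm
  have mulC : ∀ (h w : H), w ∈ CC → w * h ∈ CC := by
    have hgen : ∀ (h j : H), c j * h ∈ CC := by
      intro h j
      have e1 : c j * h = gam' s (rTensor H (mulRight R h) (comul (R := R) t)) j :=
        (gam'_nat s (mulRight R h) _ j).symm
      rw [e1, ← mul_tmul_one_eq, right_star hR, mul_one_tmul_eq]
      rw [hδ, map_sum, map_sum, Finsupp.finset_sum_apply]
      refine Submodule.sum_mem _ (fun k _ => ?_)
      rw [lTensor_tmul, gam'_tmul, mulRight_apply]
      exact Submodule.smul_mem _ _ (c_mem k)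
    intro h w hw
    induction hw using Submodule.span_induction with
    | mem y hy =>
      obtain ⟨j, _, rfl⟩ := Finset.mem_image.mp hy
      exact hgen h j
    | zero => rw [zero_mul]; exact zero_mem _
    | add y z _ _ hy hz => rw [add_mul]; exact add_mem hy hz
    | smul a y _ hy => rw [smul_mul_assoc]; exact Submodule.smul_mem _ _ hy
  have epsOne : ∀ j : H, Coalgebra.counit (R := R) (c j) • (1 : H) ∈ CC := by
    intro j
    have e0 : Coalgebra.counit (R := R) (c j) • (1 : H) = mS' (R := R) (comul (c j)) := by
      rw [← Algebra.algebraMap_eq_smul_one, mS', LinearMap.comp_apply]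
      exact (mul_antipode_lTensor_comul_apply (c j)).symm
    have e1 : mS' (R := R) (comul (c j)) =
        gam' s (rTensor H ((mS' (R := R)) ∘ₗ comul) (comul (R := R) t)) j := by
      rw [gam'_nat s _ _ j, LinearMap.comp_apply]
    rw [e0, e1, rTensor_comp, LinearMap.comp_apply]
    rw [show rTensor H (comul (R := R)) (comul (R := R) t)
        = (TensorProduct.assoc R H H H).symm (lTensor H comul (comul t)) from
        (coassoc_symm_apply t).symm]
    rw [hδ]
    simp only [map_sum, lTensor_tmul]
    rw [Finsupp.finset_sum_apply]
    refine Submodule.sum_mem _ (fun k _ => ?_)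
    have sub : ∀ (z : H ⊗[R] H) (w : H), w ∈ CC →
        gam' s (rTensor H (mS' (R := R))
          ((TensorProduct.assoc R H H H).symm (w ⊗ₜ[R] z))) j ∈ CC := by
      intro z w hw
      induction z using TensorProduct.induction_on with
      | zero => rw [tmul_zero, map_zero, map_zero, map_zero]
                simp only [Finsupp.coe_zero, Pi.zero_apply]
                exact zero_mem _
      | tmul x y =>
        rw [assoc_symm_tmul, rTensor_tmul, gam'_tmul, mS'_tmul]
        exact Submodule.smul_mem _ _ (mulC _ _ hw)
      | add z₁ z₂ h₁ h₂ =>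
        rw [tmul_add, map_add, map_add, map_add]
        simp only [Finsupp.add_apply]
        exact add_mem h₁ h₂
    exact sub (comul k) (c k) (c_mem k)
  refine ⟨c, ?_, ?_⟩
  · have h1 : (TensorProduct.lid R H) (rTensor H (counit (R := R)) (comul (R := R) t)) = t := by
      rw [rTensor_counit_comul, lid_tmul, one_smul]
    rw [← h1, hδ, map_sum, map_sum]
    refine Finset.sum_congr rfl (fun j _ => ?_)
    rw [rTensor_tmul, lid_tmul]
  · intro j x
    have : Coalgebra.counit (R := R) (c j) • x = (Coalgebra.counit (R := R) (c j) • 1) * x := by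
      rw [smul_mul_assoc, one_mul]
    rw [this]
    exact mulC x _ (epsOne j)

/-! ### Finiteness from a regular multiplier -/

lemma finite_of_regular [DecidableEq H] (s : H →ₗ[R] (H →₀ R))
    (hs : ∀ x : H, Finsupp.linearCombination R (id : H → H) (s x) = x)
    (c : H →₀ H) (r : R)
    (hreg : ∀ a : R, r * a = 0 → a = 0)
    (hr : ∀ x : H, r • x ∈ Submodule.span R ((c.support.image c : Finset H) : Set H)) :
    Module.Finite R H := by
  classical
  set T : Finset H := c.support.biUnion (fun j => (s (c j)).support) with hT
  have key : ∀ x : H, (s x).support ⊆ T := by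
    intro x
    obtain ⟨f, -, hf⟩ := Submodule.mem_span_finset.mp (hr x)
    intro i hi
    by_contra hiT
    -- then s x i = 0
    have hzero : ∀ y ∈ c.support.image c, s y i = 0 := by
      intro y hy
      obtain ⟨j, hj, rfl⟩ := Finset.mem_image.mp hy
      by_contra h0
      exact hiT (Finset.mem_biUnion.mpr ⟨j, hj, Finsupp.mem_support_iff.mpr h0⟩)
    have h1 : s (r • x) i = 0 := by
      rw [← hf, map_sum]
      rw [Finsupp.finset_sum_apply]
      refine Finset.sum_eq_zero (fun y hy => ?_)
      rw [map_smul, Finsupp.smul_apply, hzero y hy, smul_zero]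
    rw [map_smul, Finsupp.smul_apply, smul_eq_mul] at h1
    exact (Finsupp.mem_support_iff.mp hi) (hreg _ h1)
  refine ⟨⟨T, ?_⟩⟩
  rw [eq_top_iff]
  intro x _
  have hx : x = (s x).sum fun i a => a • i := by
    conv_lhs => rw [← hs x]
    rw [Finsupp.linearCombination_apply]
    rfl
  rw [hx, finsupp_sum_eq]
  refine Submodule.sum_mem _ (fun i hi => ?_)
  exact Submodule.smul_mem _ _ (Submodule.subset_span (key x hi))

end HopfFiniteAux

open HopfFiniteAux in
/-- Over a finite direct product `R = R₁ × ⋯ × Rₙ` of integral domains, a projective Hopf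
algebra containing a non-zero left or right integral `t` with `Ann_R(t) = 0` is finitely
generated as an `R`-module. -/
theorem hopf_over_product_of_domains_finite (ι : Type) [Fintype ι] (Rf : ι → Type u)
    [∀ i, CommRing (Rf i)] [∀ i, IsDomain (Rf i)] (H : Type v) [Ring H]
    [HopfAlgebra (∀ i, Rf i) H] [Module.Projective (∀ i, Rf i) H] (t : H) (ht : t ≠ 0)
    (hint : IsLeftIntegral (∀ i, Rf i) t ∨ IsRightIntegral (∀ i, Rf i) t)
    (hann : ∀ r : ∀ i, Rf i, r • t = 0 → r = 0) :
    Module.Finite (∀ i, Rf i) H := by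
  classical
  set R := ∀ i, Rf i with hR
  obtain ⟨s, hs⟩ := (Module.projective_def.mp ‹Module.Projective R H›)
  have hs' : ∀ x : H, Finsupp.linearCombination R (id : H → H) (s x) = x := hs
  -- get the decomposition data
  obtain ⟨c, hteq, hmem⟩ :
      ∃ c : H →₀ H,
        (t = ∑ j ∈ c.support, Coalgebra.counit (R := R) (c j) • j) ∧
        (∀ j x : H, Coalgebra.counit (R := R) (c j) • x ∈
          Submodule.span R ((c.support.image c : Finset H) : Set H)) := by
    rcases hint with hL | hRi
    · exact decomp_left s hs' hL
    · exact decomp_right s hs' hRi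
  -- for each coordinate `i`, find `j` with `ε (c j) i ≠ 0`
  have exists_j : ∀ i : ι, ∃ j : H, Coalgebra.counit (R := R) (c j) i ≠ 0 := by
    intro i
    by_contra hcon
    push_neg at hcon
    have h0 : (Pi.single i (1 : Rf i) : R) • t = 0 := by
      rw [hteq, Finset.smul_sum]
      refine Finset.sum_eq_zero (fun j _ => ?_)
      rw [smul_smul]
      have : (Pi.single i (1 : Rf i) : R) * Coalgebra.counit (R := R) (c j) = 0 := by
        funext i'
        by_cases h : i' = i
        · subst h
          rw [Pi.mul_apply, Pi.single_eq_same, one_mul, hcon j]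
          rfl
        · rw [Pi.mul_apply, Pi.single_eq_of_ne h, zero_mul]
          rfl
      rw [this, zero_smul]
    have := hann _ h0
    have h1 : (Pi.single i (1 : Rf i) : R) i = 0 := by rw [this]; rfl
    rw [Pi.single_eq_same] at h1
    exact one_ne_zero h1
  choose jj hjj using exists_j
  set r : R := fun i => Coalgebra.counit (R := R) (c (jj i)) i with hrdef
  have hr_eq : r = ∑ i : ι, (Pi.single i (1 : Rf i) : R) * Coalgebra.counit (R := R) (c (jj i)) := by
    funext i'
    rw [Finset.sum_apply]
    rw [Finset.sum_eq_single i'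
      (fun i _ hne => by rw [Pi.mul_apply, Pi.single_eq_of_ne (Ne.symm hne), zero_mul])
      (fun h => absurd (Finset.mem_univ i') h)]
    rw [Pi.mul_apply, Pi.single_eq_same, one_mul]
  have hr : ∀ x : H, r • x ∈ Submodule.span R ((c.support.image c : Finset H) : Set H) := by
    intro x
    rw [hr_eq, Finset.sum_smul]
    refine Submodule.sum_mem _ (fun i _ => ?_)
    rw [mul_smul]
    exact Submodule.smul_mem _ _ (hmem (jj i) x)
  have hreg : ∀ a : R, r * a = 0 → a = 0 := by
    intro a ha
    funext i
    have : r i * a i = 0 := congrFun ha i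
    rcases mul_eq_zero.mp this with h | h
    · exact absurd h (hjj i)
    · exact h
  exact finite_of_regular s hs' c r hreg hr
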